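/- Let {X(τ):τ∈S_0^d} be a d-admissible family with sup_{τ∈S_0^d} E[X(τ)] < ∞. Then for every stopping time S∈S_0, the d-stopping value function coincides with the single-stopping value function of the new reward: v(S) = u(S) a.s. -/

import Mathlib

open MeasureTheory Filter Set

noncomputable section

namespace OptMultStop

variable {Ω : Type*}

/-- A real function is right-continuous with left limits (RCLL) on `[0, T]`. -/
def RCLLOn (f : ℝ → ℝ) (T : ℝ) : Prop :=
  (∀ t ∈ Set.Ico (0 : ℝ) T, ContinuousWithinAt f (Set.Ici t) t) ∧
    ∀ t ∈ Set.Ioc (0 : ℝ) T, ∃ l : ℝ, Filter.Tendsto f (nhdsWithin t (Set.Iio t)) (nhds l)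

/-- A real function is right-continuous on `[0, T)`. -/
def RCOn (f : ℝ → ℝ) (T : ℝ) : Prop :=
  ∀ t ∈ Set.Ico (0 : ℝ) T, ContinuousWithinAt f (Set.Ici t) t

/-- `τ` is a stopping time for `ℱ` taking values in `[s ·, T]`; for `s = S` a stopping
time this encodes membership in `S_S`. -/
def IsStopIn [m : MeasurableSpace Ω] (ℱ : Filtration ℝ m) (T : ℝ) (s τ : Ω → ℝ) : Prop :=
  IsStoppingTime ℱ (fun ω => (τ ω : WithTop ℝ)) ∧ (∀ ω, s ω ≤ τ ω) ∧ ∀ ω, τ ω ≤ T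

/-- Membership in `S_0`: a stopping time with values in `[0, T]`. -/
def Stop0 [m : MeasurableSpace Ω] (ℱ : Filtration ℝ m) (T : ℝ) (τ : Ω → ℝ) : Prop :=
  IsStopIn ℱ T (fun _ => (0 : ℝ)) τ

/-- `g` is an essential supremum of the family of random variables `s`. -/
def IsEssSupFam [MeasurableSpace Ω] (μ : Measure Ω) (s : Set (Ω → ℝ)) (g : Ω → ℝ) : Prop :=
  (∀ f ∈ s, f ≤ᵐ[μ] g) ∧ ∀ h : Ω → ℝ, (∀ f ∈ s, f ≤ᵐ[μ] h) → g ≤ᵐ[μ] h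

/-- `g` is an essential infimum of the family of random variables `s`. -/
def IsEssInfFam [MeasurableSpace Ω] (μ : Measure Ω) (s : Set (Ω → ℝ)) (g : Ω → ℝ) : Prop :=
  (∀ f ∈ s, g ≤ᵐ[μ] f) ∧ ∀ h : Ω → ℝ, (∀ f ∈ s, h ≤ᵐ[μ] f) → h ≤ᵐ[μ] g

/-- An `𝔽`-consistent nonlinear expectation `(E, Dom(E))` on the horizon `[0, T]`,
together with its conditional versions at stopping times, satisfying the domain
axioms (D1)-(D3), (A1)-(A4) at stopping times, and hypotheses (H0)-(H5). -/
structure FExp [m : MeasurableSpace Ω] (μ : Measure Ω) (T : ℝ) (ℱ : Filtration ℝ m) where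
  /-- the domain `Dom(E)` -/
  Dom : Set (Ω → ℝ)
  /-- `cond τ ξ` is the conditional expectation `E_τ[ξ]` at the stopping time `τ` -/
  cond : (Ω → ℝ) → (Ω → ℝ) → Ω → ℝ
  /-- `E0 ξ` is the (deterministic) value `E[ξ] = E_0[ξ]` -/
  E0 : (Ω → ℝ) → ℝ
  zero_mem : (fun _ => (0 : ℝ)) ∈ Dom
  one_mem : (fun _ => (1 : ℝ)) ∈ Dom
  /-- (H4): all constants belong to the domain -/
  const_mem : ∀ c : ℝ, (fun _ => c) ∈ Dom
  add_mem : ∀ {ξ η : Ω → ℝ}, ξ ∈ Dom → η ∈ Dom → ξ + η ∈ Dom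
  indicator_mem : ∀ {ξ : Ω → ℝ}, ξ ∈ Dom → ∀ {A : Set Ω}, MeasurableSet A →
    A.indicator ξ ∈ Dom
  sandwich_mem : ∀ {ξ η : Ω → ℝ}, η ∈ Dom → (∀ᵐ ω ∂μ, 0 ≤ ξ ω ∧ ξ ω ≤ η ω) → ξ ∈ Dom
  cond_mem : ∀ {τ ξ : Ω → ℝ}, Stop0 ℱ T τ → ξ ∈ Dom → 0 ≤ᵐ[μ] ξ → cond τ ξ ∈ Dom
  cond_nonneg : ∀ {τ ξ : Ω → ℝ}, Stop0 ℱ T τ → ξ ∈ Dom → 0 ≤ᵐ[μ] ξ → 0 ≤ᵐ[μ] cond τ ξ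
  /-- `E_τ[ξ]` is `F_τ`-measurable -/
  cond_adapted : ∀ {τ ξ : Ω → ℝ} (hτ : Stop0 ℱ T τ), ξ ∈ Dom → 0 ≤ᵐ[μ] ξ →
    Measurable[hτ.1.measurableSpace] (cond τ ξ)
  /-- monotonicity -/
  mono : ∀ {τ ξ η : Ω → ℝ}, Stop0 ℱ T τ → ξ ∈ Dom → 0 ≤ᵐ[μ] ξ → η ∈ Dom → 0 ≤ᵐ[μ] η →
    ξ ≤ᵐ[μ] η → cond τ ξ ≤ᵐ[μ] cond τ η
  /-- strict monotonicity -/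
  strict_mono : ∀ {τ ξ η : Ω → ℝ}, Stop0 ℱ T τ → ξ ∈ Dom → 0 ≤ᵐ[μ] ξ → η ∈ Dom →
    0 ≤ᵐ[μ] η → ξ ≤ᵐ[μ] η → cond τ ξ =ᵐ[μ] cond τ η → ξ =ᵐ[μ] η
  /-- time consistency -/
  time_consistent : ∀ {σ τ ξ : Ω → ℝ}, Stop0 ℱ T σ → Stop0 ℱ T τ → (∀ ω, σ ω ≤ τ ω) →
    ξ ∈ Dom → 0 ≤ᵐ[μ] ξ → cond σ (cond τ ξ) =ᵐ[μ] cond σ ξ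
  /-- zero-one law -/
  zero_one : ∀ {τ ξ : Ω → ℝ} (hτ : Stop0 ℱ T τ), ξ ∈ Dom → 0 ≤ᵐ[μ] ξ →
    ∀ {A : Set Ω}, MeasurableSet[hτ.1.measurableSpace] A →
    cond τ (A.indicator ξ) =ᵐ[μ] A.indicator (cond τ ξ)
  /-- translation invariance -/
  translation : ∀ {τ ξ η : Ω → ℝ} (hτ : Stop0 ℱ T τ), ξ ∈ Dom → 0 ≤ᵐ[μ] ξ → η ∈ Dom →
    0 ≤ᵐ[μ] η → Measurable[hτ.1.measurableSpace] η → cond τ (ξ + η) =ᵐ[μ] cond τ ξ + η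
  /-- `F_0` is trivial: `E_0[ξ]` is the constant `E0 ξ` -/
  E0_eq : ∀ {ξ : Ω → ℝ}, ξ ∈ Dom → 0 ≤ᵐ[μ] ξ →
    cond (fun _ => (0 : ℝ)) ξ =ᵐ[μ] fun _ => E0 ξ
  /-- the process `t ↦ E_t[ξ]` has RCLL paths -/
  rcll_paths : ∀ {ξ : Ω → ℝ}, ξ ∈ Dom → 0 ≤ᵐ[μ] ξ →
    ∀ᵐ ω ∂μ, RCLLOn (fun t => cond (fun _ => t) ξ ω) T
  /-- (H0) -/
  h0 : ∀ {A : Set Ω}, MeasurableSet A → 0 < μ A →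
    Tendsto (fun n : ℕ => E0 (A.indicator fun _ => (n : ℝ))) atTop atTop
  /-- (H1) -/
  h1 : ∀ {ξ : Ω → ℝ}, ξ ∈ Dom → 0 ≤ᵐ[μ] ξ → ∀ {A : ℕ → Set Ω},
    (∀ n, MeasurableSet (A n)) → Monotone A → (∀ᵐ ω ∂μ, ω ∈ ⋃ n, A n) →
    Tendsto (fun n => E0 ((A n).indicator ξ)) atTop (nhds (E0 ξ))
  /-- (H2) -/
  h2 : ∀ {ξ η : Ω → ℝ}, ξ ∈ Dom → 0 ≤ᵐ[μ] ξ → η ∈ Dom → 0 ≤ᵐ[μ] η →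
    ∀ {A : ℕ → Set Ω}, (∀ n, MeasurableSet (A n)) → Antitone A →
    (∀ᵐ ω ∂μ, ω ∉ ⋂ n, A n) →
    Tendsto (fun n => E0 (ξ + (A n).indicator η)) atTop (nhds (E0 ξ))
  /-- (H5) -/
  h5 : ∀ {ξ : ℕ → Ω → ℝ} {ζ : Ω → ℝ}, (∀ n, ξ n ∈ Dom) → (∀ n, 0 ≤ᵐ[μ] ξ n) →
    (∀ᵐ ω ∂μ, Tendsto (fun n => ξ n ω) atTop (nhds (ζ ω))) →
    (∃ C : ℝ, ∃ᶠ n in atTop, E0 (ξ n) ≤ C) → ζ ∈ Dom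

variable [m : MeasurableSpace Ω] {μ : Measure Ω} {T : ℝ} {ℱ : Filtration ℝ m}

/-- (H6): sub-additivity. -/
def FExp.Subadditive (𝔈 : FExp μ T ℱ) : Prop :=
  ∀ ⦃τ ξ η : Ω → ℝ⦄, Stop0 ℱ T τ → ξ ∈ 𝔈.Dom → 0 ≤ᵐ[μ] ξ → η ∈ 𝔈.Dom → 0 ≤ᵐ[μ] η →
    𝔈.cond τ (ξ + η) ≤ᵐ[μ] 𝔈.cond τ ξ + 𝔈.cond τ η

/-- (H7): positive homogeneity. -/
def FExp.PosHom (𝔈 : FExp μ T ℱ) : Prop :=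
  ∀ ⦃τ ξ : Ω → ℝ⦄ (l : ℝ), 0 ≤ l → Stop0 ℱ T τ → ξ ∈ 𝔈.Dom → 0 ≤ᵐ[μ] ξ →
    𝔈.cond τ (fun ω => l * ξ ω) =ᵐ[μ] fun ω => l * 𝔈.cond τ ξ ω

/-- Admissible family of rewards indexed by stopping times. -/
def Admissible (𝔈 : FExp μ T ℱ) (X : (Ω → ℝ) → Ω → ℝ) : Prop :=
  (∀ τ : Ω → ℝ, ∀ hτ : Stop0 ℱ T τ, X τ ∈ 𝔈.Dom ∧ 0 ≤ᵐ[μ] X τ ∧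
      Measurable[hτ.1.measurableSpace] (X τ)) ∧
    ∀ τ σ : Ω → ℝ, Stop0 ℱ T τ → Stop0 ℱ T σ →
      ∀ᵐ ω ∂μ, τ ω = σ ω → X τ ω = X σ ω

/-- `sup_{τ ∈ S_0} E[X(τ)] < ∞`. -/
def BddRewardE0 (𝔈 : FExp μ T ℱ) (X : (Ω → ℝ) → Ω → ℝ) : Prop :=
  ∃ C : ℝ, ∀ τ : Ω → ℝ, Stop0 ℱ T τ → 𝔈.E0 (X τ) ≤ C

/-- `v` is the value function family of the single stopping problem for the reward `X`:
`v(S) = esssup_{τ ∈ S_S} E_S[X(τ)]`. -/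
def IsValueFam (𝔈 : FExp μ T ℱ) (X v : (Ω → ℝ) → Ω → ℝ) : Prop :=
  ∀ S : Ω → ℝ, Stop0 ℱ T S →
    IsEssSupFam μ {g | ∃ τ : Ω → ℝ, IsStopIn ℱ T S τ ∧ g = 𝔈.cond S (X τ)} (v S)

/-- An `E`-supermartingale system. -/
def SupermartSys (𝔈 : FExp μ T ℱ) (h : (Ω → ℝ) → Ω → ℝ) : Prop :=
  (∀ τ : Ω → ℝ, ∀ hτ : Stop0 ℱ T τ, h τ ∈ 𝔈.Dom ∧ 0 ≤ᵐ[μ] h τ ∧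
      Measurable[hτ.1.measurableSpace] (h τ)) ∧
    ∀ τ σ : Ω → ℝ, Stop0 ℱ T τ → Stop0 ℱ T σ → (∀ᵐ ω ∂μ, τ ω ≤ σ ω) →
      𝔈.cond τ (h σ) ≤ᵐ[μ] h τ

/-- Right-continuity along stopping times in `E`-expectation (RCE). -/
def RCE (𝔈 : FExp μ T ℱ) (X : (Ω → ℝ) → Ω → ℝ) : Prop :=
  ∀ τ : Ω → ℝ, Stop0 ℱ T τ → ∀ τs : ℕ → Ω → ℝ, (∀ n, Stop0 ℱ T (τs n)) →
    (∀ᵐ ω ∂μ, Antitone (fun n => τs n ω) ∧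
      Tendsto (fun n => τs n ω) atTop (nhds (τ ω))) →
    Tendsto (fun n => 𝔈.E0 (X (τs n))) atTop (nhds (𝔈.E0 (X τ)))

/-- Left-continuity along stopping times in `E`-expectation (LCE). -/
def LCE (𝔈 : FExp μ T ℱ) (X : (Ω → ℝ) → Ω → ℝ) : Prop :=
  ∀ τ : Ω → ℝ, Stop0 ℱ T τ → ∀ τs : ℕ → Ω → ℝ, (∀ n, Stop0 ℱ T (τs n)) →
    (∀ᵐ ω ∂μ, Monotone (fun n => τs n ω) ∧
      Tendsto (fun n => τs n ω) atTop (nhds (τ ω))) →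
    Tendsto (fun n => 𝔈.E0 (X (τs n))) atTop (nhds (𝔈.E0 (X τ)))

/-- Continuity along stopping times in `E`-expectation (CE). -/
def CE (𝔈 : FExp μ T ℱ) (X : (Ω → ℝ) → Ω → ℝ) : Prop :=
  RCE 𝔈 X ∧ LCE 𝔈 X

/-- Right-continuity along stopping times (RC): a.s. pointwise convergence. -/
def RCfam (𝔈 : FExp μ T ℱ) (X : (Ω → ℝ) → Ω → ℝ) : Prop :=
  ∀ τ : Ω → ℝ, Stop0 ℱ T τ → ∀ τs : ℕ → Ω → ℝ, (∀ n, Stop0 ℱ T (τs n)) →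
    (∀ᵐ ω ∂μ, Antitone (fun n => τs n ω) ∧
      Tendsto (fun n => τs n ω) atTop (nhds (τ ω))) →
    ∀ᵐ ω ∂μ, Tendsto (fun n => X (τs n) ω) atTop (nhds (X τ ω))

/-- Biadmissible family of rewards indexed by pairs of stopping times. -/
def Biadmissible (𝔈 : FExp μ T ℱ) (X : (Ω → ℝ) → (Ω → ℝ) → Ω → ℝ) : Prop :=
  (∀ τ σ : Ω → ℝ, ∀ hτ : Stop0 ℱ T τ, ∀ hσ : Stop0 ℱ T σ,
      X τ σ ∈ 𝔈.Dom ∧ 0 ≤ᵐ[μ] X τ σ ∧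
      Measurable[(hτ.1.max hσ.1).measurableSpace] (X τ σ)) ∧
    ∀ τ σ τ' σ' : Ω → ℝ, Stop0 ℱ T τ → Stop0 ℱ T σ → Stop0 ℱ T τ' → Stop0 ℱ T σ' →
      ∀ᵐ ω ∂μ, τ ω = τ' ω → σ ω = σ' ω → X τ σ ω = X τ' σ' ω

/-- `sup_{τ,σ ∈ S_0} E[X(τ,σ)] < ∞`. -/
def BddReward2E0 (𝔈 : FExp μ T ℱ) (X : (Ω → ℝ) → (Ω → ℝ) → Ω → ℝ) : Prop :=
  ∃ C : ℝ, ∀ τ σ : Ω → ℝ, Stop0 ℱ T τ → Stop0 ℱ T σ → 𝔈.E0 (X τ σ) ≤ C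

/-- `v` is the value function family of the double stopping problem:
`v(S) = esssup_{τ₁,τ₂ ∈ S_S} E_S[X(τ₁,τ₂)]`. -/
def IsValueFam2 (𝔈 : FExp μ T ℱ) (X : (Ω → ℝ) → (Ω → ℝ) → Ω → ℝ)
    (v : (Ω → ℝ) → Ω → ℝ) : Prop :=
  ∀ S : Ω → ℝ, Stop0 ℱ T S →
    IsEssSupFam μ
      {g | ∃ τ₁ τ₂ : Ω → ℝ, IsStopIn ℱ T S τ₁ ∧ IsStopIn ℱ T S τ₂ ∧
        g = 𝔈.cond S (X τ₁ τ₂)} (v S)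

/-- `u₁(θ) = esssup_{τ₁ ∈ S_θ} E_θ[X(τ₁, θ)]`. -/
def IsU1 (𝔈 : FExp μ T ℱ) (X : (Ω → ℝ) → (Ω → ℝ) → Ω → ℝ) (u₁ : (Ω → ℝ) → Ω → ℝ) : Prop :=
  ∀ θ : Ω → ℝ, Stop0 ℱ T θ →
    IsEssSupFam μ {g | ∃ τ : Ω → ℝ, IsStopIn ℱ T θ τ ∧ g = 𝔈.cond θ (X τ θ)} (u₁ θ)

/-- `u₂(θ) = esssup_{τ₂ ∈ S_θ} E_θ[X(θ, τ₂)]`. -/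
def IsU2 (𝔈 : FExp μ T ℱ) (X : (Ω → ℝ) → (Ω → ℝ) → Ω → ℝ) (u₂ : (Ω → ℝ) → Ω → ℝ) : Prop :=
  ∀ θ : Ω → ℝ, Stop0 ℱ T θ →
    IsEssSupFam μ {g | ∃ τ : Ω → ℝ, IsStopIn ℱ T θ τ ∧ g = 𝔈.cond θ (X θ τ)} (u₂ θ)

/-- Uniform right-continuity of a biadmissible family along stopping times in
`ℰ`-expectation (URCℰ). -/
def URCE2 (ℰ : FExp μ T ℱ) (X : (Ω → ℝ) → (Ω → ℝ) → Ω → ℝ) : Prop :=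
  ∀ σ : Ω → ℝ, Stop0 ℱ T σ → ∀ σs : ℕ → Ω → ℝ, (∀ n, Stop0 ℱ T (σs n)) →
    (∀ᵐ ω ∂μ, Antitone (fun n => σs n ω) ∧
      Tendsto (fun n => σs n ω) atTop (nhds (σ ω))) →
    ∀ ε : ℝ, 0 < ε → ∃ N : ℕ, ∀ n ≥ N, ∀ τ : Ω → ℝ, Stop0 ℱ T τ →
      ℰ.E0 (fun ω => |X τ σ ω - X τ (σs n) ω|) ≤ ε ∧
      ℰ.E0 (fun ω => |X σ τ ω - X (σs n) τ ω|) ≤ ε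

/-- Uniform left-continuity of a biadmissible family along stopping times in
`ℰ`-expectation (ULCℰ). -/
def ULCE2 (ℰ : FExp μ T ℱ) (X : (Ω → ℝ) → (Ω → ℝ) → Ω → ℝ) : Prop :=
  ∀ σ : Ω → ℝ, Stop0 ℱ T σ → ∀ σs : ℕ → Ω → ℝ, (∀ n, Stop0 ℱ T (σs n)) →
    (∀ᵐ ω ∂μ, Monotone (fun n => σs n ω) ∧
      Tendsto (fun n => σs n ω) atTop (nhds (σ ω))) →
    ∀ ε : ℝ, 0 < ε → ∃ N : ℕ, ∀ n ≥ N, ∀ τ : Ω → ℝ, Stop0 ℱ T τ →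
      ℰ.E0 (fun ω => |X τ σ ω - X τ (σs n) ω|) ≤ ε ∧
      ℰ.E0 (fun ω => |X σ τ ω - X (σs n) τ ω|) ≤ ε

/-- Uniform continuity (UCℰ) of a biadmissible family. -/
def UCE2 (ℰ : FExp μ T ℱ) (X : (Ω → ℝ) → (Ω → ℝ) → Ω → ℝ) : Prop :=
  URCE2 ℰ X ∧ ULCE2 ℰ X

/-- `(E, Dom(E))` is dominated by `(Ẽ, Dom(Ẽ))`. -/
def Dominated (𝔈 𝔉 : FExp μ T ℱ) : Prop :=
  𝔈.Dom ⊆ 𝔉.Dom ∧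
    ∀ τ : Ω → ℝ, Stop0 ℱ T τ → ∀ ξ η : Ω → ℝ, ξ ∈ 𝔈.Dom → η ∈ 𝔈.Dom →
      ∀ᵐ ω ∂μ, 𝔈.cond τ (ξ + η) ω - 𝔈.cond τ η ω ≤ 𝔉.cond τ ξ ω

/-- The filtration contains all `μ`-null sets (part of the usual conditions). -/
def CompleteFiltration (μ : Measure Ω) (ℱ : Filtration ℝ m) : Prop :=
  ∀ s : Set Ω, μ s = 0 → ∀ t : ℝ, MeasurableSet[ℱ t] s

/-- The filtration is right-continuous (part of the usual conditions). -/
def RightContinuousFiltration (ℱ : Filtration ℝ m) : Prop :=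
  ∀ t : ℝ, (ℱ t : MeasurableSpace Ω) = ⨅ u ∈ Set.Ioi t, ℱ u

/-- A `d`-tuple of stopping times, all in `S_s`. -/
def StopVec (ℱ : Filtration ℝ m) (T : ℝ) (s : Ω → ℝ) {d : ℕ} (τ : Fin d → Ω → ℝ) : Prop :=
  ∀ i, IsStopIn ℱ T s (τ i)

/-- A `d`-admissible family of rewards. -/
def DAdmissible (𝔈 : FExp μ T ℱ) {d : ℕ} (X : (Fin d → Ω → ℝ) → Ω → ℝ) : Prop :=
  (∀ τ : Fin d → Ω → ℝ, StopVec ℱ T (fun _ => (0 : ℝ)) τ →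
      X τ ∈ 𝔈.Dom ∧ 0 ≤ᵐ[μ] X τ ∧
      ∀ h : IsStoppingTime ℱ fun ω => (((⨆ i, τ i ω : ℝ)) : WithTop ℝ),
        Measurable[h.measurableSpace] (X τ)) ∧
    ∀ τ σ : Fin d → Ω → ℝ, StopVec ℱ T (fun _ => (0 : ℝ)) τ →
      StopVec ℱ T (fun _ => (0 : ℝ)) σ →
      ∀ᵐ ω ∂μ, (∀ i, τ i ω = σ i ω) → X τ ω = X σ ω

/-- `sup_{τ ∈ S_0^d} E[X(τ)] < ∞`. -/
def BddRewardDE0 (𝔈 : FExp μ T ℱ) {d : ℕ} (X : (Fin d → Ω → ℝ) → Ω → ℝ) : Prop :=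
  ∃ C : ℝ, ∀ τ : Fin d → Ω → ℝ, StopVec ℱ T (fun _ => (0 : ℝ)) τ → 𝔈.E0 (X τ) ≤ C

/-- `v` is the value function family of the `d`-stopping problem:
`v(S) = esssup_{τ ∈ S_S^d} E_S[X(τ)]`. -/
def IsValueFamD (𝔈 : FExp μ T ℱ) {d : ℕ} (X : (Fin d → Ω → ℝ) → Ω → ℝ)
    (v : (Ω → ℝ) → Ω → ℝ) : Prop :=
  ∀ S : Ω → ℝ, Stop0 ℱ T S →
    IsEssSupFam μ
      {g | ∃ τ : Fin d → Ω → ℝ, StopVec ℱ T S τ ∧ g = 𝔈.cond S (X τ)} (v S)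

/-- `u^{(i)}(θ) = esssup_{τ ∈ S_θ^{d-1}} E_θ[X^{(i)}(τ, θ)]`, where `X^{(i)}(τ, θ)`
inserts `θ` in the `i`-th slot. -/
def IsUi (𝔈 : FExp μ T ℱ) {d : ℕ} (X : (Fin (d + 1) → Ω → ℝ) → Ω → ℝ)
    (ui : Fin (d + 1) → (Ω → ℝ) → Ω → ℝ) : Prop :=
  ∀ i : Fin (d + 1), ∀ θ : Ω → ℝ, Stop0 ℱ T θ →
    IsEssSupFam μ
      {g | ∃ τ : Fin d → Ω → ℝ, StopVec ℱ T θ τ ∧ g = 𝔈.cond θ (X (i.insertNth θ τ))}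
      (ui i θ)

/-- Uniform continuity (UCE) of a `d`-admissible family along monotone sequences of
stopping times. -/
def UCED (𝔈 : FExp μ T ℱ) {d : ℕ} (X : (Fin (d + 1) → Ω → ℝ) → Ω → ℝ) : Prop :=
  ∀ i : Fin (d + 1), ∀ S : Ω → ℝ, Stop0 ℱ T S → ∀ Ss : ℕ → Ω → ℝ,
    (∀ n, Stop0 ℱ T (Ss n)) →
    ((∀ᵐ ω ∂μ, Monotone fun n => Ss n ω) ∨ (∀ᵐ ω ∂μ, Antitone fun n => Ss n ω)) →
    (∀ᵐ ω ∂μ, Tendsto (fun n => Ss n ω) atTop (nhds (S ω))) →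
    ∀ ε : ℝ, 0 < ε → ∃ N : ℕ, ∀ n ≥ N, ∀ θ : Fin d → Ω → ℝ,
      StopVec ℱ T (fun _ => (0 : ℝ)) θ →
      𝔈.E0 (fun ω => |X (i.insertNth (Ss n) θ) ω - X (i.insertNth S θ) ω|) ≤ ε


section AuxProof

set_option linter.unusedSectionVars false
open scoped Classical ENNReal NNReal

variable {S τ θ : Ω → ℝ} {ξ η : Ω → ℝ} {𝔈 : FExp μ T ℱ}

lemma aux_stop0_zero (hT : 0 ≤ T) : Stop0 ℱ T (fun _ => (0 : ℝ)) :=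
  ⟨isStoppingTime_const ℱ 0, fun _ => le_rfl, fun _ => hT⟩

lemma aux_stop0_of (hS : Stop0 ℱ T S) (h : IsStopIn ℱ T S τ) : Stop0 ℱ T τ :=
  ⟨h.1, fun ω => (hS.2.1 ω).trans (h.2.1 ω), h.2.2⟩

lemma aux_stopIn_self (hS : Stop0 ℱ T S) : IsStopIn ℱ T S S :=
  ⟨hS.1, fun _ => le_rfl, hS.2.2⟩

lemma aux_stopvec0 {k : ℕ} (hθ : Stop0 ℱ T θ) {σ : Fin k → Ω → ℝ}
    (h : StopVec ℱ T θ σ) : StopVec ℱ T (fun _ => (0 : ℝ)) σ := fun i =>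
  ⟨(h i).1, fun ω => (hθ.2.1 ω).trans ((h i).2.1 ω), (h i).2.2⟩

lemma aux_cond_meas (hτ : Stop0 ℱ T τ) (h1 : ξ ∈ 𝔈.Dom) (h2 : 0 ≤ᵐ[μ] ξ) :
    Measurable (𝔈.cond τ ξ) :=
  (𝔈.cond_adapted hτ h1 h2).mono hτ.1.measurableSpace_le le_rfl

lemma aux_ae_const_le [IsProbabilityMeasure μ] {a b : ℝ}
    (h : (fun _ : Ω => a) ≤ᵐ[μ] fun _ => b) : a ≤ b := by
  haveI : (ae μ).NeBot := ae_neBot.2 (IsProbabilityMeasure.ne_zero μ)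
  obtain ⟨ω, hω⟩ := h.exists
  exact hω

lemma aux_E0_mono [IsProbabilityMeasure μ] (hT : 0 ≤ T) (hξ : ξ ∈ 𝔈.Dom) (hξ0 : 0 ≤ᵐ[μ] ξ)
    (hη : η ∈ 𝔈.Dom) (hη0 : 0 ≤ᵐ[μ] η) (hle : ξ ≤ᵐ[μ] η) : 𝔈.E0 ξ ≤ 𝔈.E0 η := by
  have h := 𝔈.mono (aux_stop0_zero hT) hξ hξ0 hη hη0 hle
  have e1 := 𝔈.E0_eq hξ hξ0
  have e2 := 𝔈.E0_eq hη hη0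
  exact aux_ae_const_le ((e1.symm.le.trans h).trans e2.le)

lemma aux_E0_cond [IsProbabilityMeasure μ] (hT : 0 ≤ T) (hθ : Stop0 ℱ T θ)
    (hξ : ξ ∈ 𝔈.Dom) (hξ0 : 0 ≤ᵐ[μ] ξ) : 𝔈.E0 (𝔈.cond θ ξ) = 𝔈.E0 ξ := by
  have hc := 𝔈.cond_mem hθ hξ hξ0
  have hc0 := 𝔈.cond_nonneg hθ hξ hξ0
  have ht := 𝔈.time_consistent (aux_stop0_zero hT) hθ (fun ω => hθ.2.1 ω) hξ hξ0
  have e1 := 𝔈.E0_eq hc hc0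
  have e2 := 𝔈.E0_eq hξ hξ0
  have h3 : (fun _ : Ω => 𝔈.E0 (𝔈.cond θ ξ)) =ᵐ[μ] fun _ => 𝔈.E0 ξ :=
    e1.symm.trans (ht.trans e2)
  exact le_antisymm (aux_ae_const_le h3.le) (aux_ae_const_le h3.symm.le)

lemma aux_cond_congr (hτ : Stop0 ℱ T τ) (hξ : ξ ∈ 𝔈.Dom) (hξ0 : 0 ≤ᵐ[μ] ξ)
    (hη : η ∈ 𝔈.Dom) (hη0 : 0 ≤ᵐ[μ] η) (h : ξ =ᵐ[μ] η) :
    𝔈.cond τ ξ =ᵐ[μ] 𝔈.cond τ η :=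
  (𝔈.mono hτ hξ hξ0 hη hη0 h.le).antisymm (𝔈.mono hτ hη hη0 hξ hξ0 h.symm.le)

lemma aux_ind_mem (hξ : ξ ∈ 𝔈.Dom) (hξ0 : 0 ≤ᵐ[μ] ξ) {A : Set Ω} (hA : MeasurableSet A) :
    A.indicator ξ ∈ 𝔈.Dom ∧ 0 ≤ᵐ[μ] A.indicator ξ :=
  ⟨𝔈.indicator_mem hξ hA, hξ0.mono fun ω h => Set.indicator_apply_nonneg fun _ => h⟩

lemma aux_paste_stopIn (hθ : Stop0 ℱ T θ) {τ τ' : Ω → ℝ} (h : IsStopIn ℱ T θ τ)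
    (h' : IsStopIn ℱ T θ τ') {C : Set Ω} (hC : MeasurableSet[hθ.1.measurableSpace] C) :
    IsStopIn ℱ T θ (fun ω => if ω ∈ C then τ ω else τ' ω) := by
  refine ⟨fun t => ?_, fun ω => ?_, fun ω => ?_⟩
  · simp only [WithTop.coe_le_coe]
    have h1t := h.1 t
    have h2t := h'.1 t
    have hC1 := ((hθ.1.measurableSet C).1 hC).2 t
    have hC2 := ((hθ.1.measurableSet Cᶜ).1 hC.compl).2 t
    simp only [WithTop.coe_le_coe] at h1t h2t hC1 hC2
    have hset : {ω | (if ω ∈ C then τ ω else τ' ω) ≤ t}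
        = ((C ∩ {ω | θ ω ≤ t}) ∩ {ω | τ ω ≤ t})
          ∪ ((Cᶜ ∩ {ω | θ ω ≤ t}) ∩ {ω | τ' ω ≤ t}) := by
      ext ω
      by_cases hω : ω ∈ C
      · simp only [Set.mem_setOf_eq, hω, if_true, Set.mem_union, Set.mem_inter_iff,
          Set.mem_compl_iff, not_true, false_and, and_false, or_false, true_and]
        exact ⟨fun hh => ⟨(h.2.1 ω).trans hh, hh⟩, fun hh => hh.2⟩
      · simp only [Set.mem_setOf_eq, hω, if_false, Set.mem_union, Set.mem_inter_iff,
          Set.mem_compl_iff, not_false_iff, true_and, false_and, and_false, false_or]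
        exact ⟨fun hh => ⟨(h'.2.1 ω).trans hh, hh⟩, fun hh => hh.2⟩
    rw [hset]
    exact (hC1.inter h1t).union (hC2.inter h2t)
  · by_cases hω : ω ∈ C <;> simp only [hω, if_true, if_false]
    exacts [h.2.1 ω, h'.2.1 ω]
  · by_cases hω : ω ∈ C <;> simp only [hω, if_true, if_false]
    exacts [h.2.2 ω, h'.2.2 ω]

lemma aux_ins_stopvec {d : ℕ} (hθ : Stop0 ℱ T θ) (i : Fin (d+1)) {τ : Fin d → Ω → ℝ}
    (hτ : StopVec ℱ T θ τ) : StopVec ℱ T θ (i.insertNth θ τ) := by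
  intro j
  refine Fin.succAboveCases i ?_ ?_ j
  · rw [Fin.insertNth_apply_same]
    exact aux_stopIn_self hθ
  · intro k
    rw [Fin.insertNth_apply_succAbove]
    exact hτ k

lemma aux_paste_cond {d : ℕ} {X : (Fin (d+1) → Ω → ℝ) → Ω → ℝ} (hX : DAdmissible 𝔈 X)
    (hθ : Stop0 ℱ T θ) {σ σ' : Fin (d+1) → Ω → ℝ} (hσ : StopVec ℱ T θ σ)
    (hσ' : StopVec ℱ T θ σ') {C : Set Ω} (hC : MeasurableSet[hθ.1.measurableSpace] C) :
    StopVec ℱ T θ (fun j ω => if ω ∈ C then σ j ω else σ' j ω) ∧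
    𝔈.cond θ (X (fun j ω => if ω ∈ C then σ j ω else σ' j ω)) =ᵐ[μ]
      fun ω => if ω ∈ C then 𝔈.cond θ (X σ) ω else 𝔈.cond θ (X σ') ω := by
  set ρ : Fin (d+1) → Ω → ℝ := fun j ω => if ω ∈ C then σ j ω else σ' j ω with hρ
  have hρvec : StopVec ℱ T θ ρ := fun j => aux_paste_stopIn hθ (hσ j) (hσ' j) hC
  refine ⟨hρvec, ?_⟩
  have hCm : MeasurableSet C := hθ.1.measurableSpace_le _ hC
  obtain ⟨hρD, hρ0, -⟩ := hX.1 ρ (aux_stopvec0 hθ hρvec)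
  obtain ⟨hσD, hσ0, -⟩ := hX.1 σ (aux_stopvec0 hθ hσ)
  obtain ⟨hσ'D, hσ'0, -⟩ := hX.1 σ' (aux_stopvec0 hθ hσ')
  have heqC : C.indicator (X ρ) =ᵐ[μ] C.indicator (X σ) := by
    filter_upwards [hX.2 ρ σ (aux_stopvec0 hθ hρvec) (aux_stopvec0 hθ hσ)] with ω h
    by_cases hω : ω ∈ C
    · rw [Set.indicator_of_mem hω, Set.indicator_of_mem hω]
      exact h fun j => by simp [hρ, hω]
    · rw [Set.indicator_of_notMem hω, Set.indicator_of_notMem hω]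
  have heqC' : Cᶜ.indicator (X ρ) =ᵐ[μ] Cᶜ.indicator (X σ') := by
    filter_upwards [hX.2 ρ σ' (aux_stopvec0 hθ hρvec) (aux_stopvec0 hθ hσ')] with ω h
    by_cases hω : ω ∈ C
    · rw [Set.indicator_of_notMem (by simpa using hω),
        Set.indicator_of_notMem (by simpa using hω)]
    · rw [Set.indicator_of_mem (by simpa using hω), Set.indicator_of_mem (by simpa using hω)]
      exact h fun j => by simp [hρ, hω]
  have e1 : C.indicator (𝔈.cond θ (X ρ)) =ᵐ[μ] C.indicator (𝔈.cond θ (X σ)) :=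
    (𝔈.zero_one hθ hρD hρ0 hC).symm.trans
      ((aux_cond_congr hθ (aux_ind_mem hρD hρ0 hCm).1 (aux_ind_mem hρD hρ0 hCm).2
        (aux_ind_mem hσD hσ0 hCm).1 (aux_ind_mem hσD hσ0 hCm).2 heqC).trans
        (𝔈.zero_one hθ hσD hσ0 hC))
  have e2 : Cᶜ.indicator (𝔈.cond θ (X ρ)) =ᵐ[μ] Cᶜ.indicator (𝔈.cond θ (X σ')) :=
    (𝔈.zero_one hθ hρD hρ0 hC.compl).symm.trans
      ((aux_cond_congr hθ (aux_ind_mem hρD hρ0 hCm.compl).1 (aux_ind_mem hρD hρ0 hCm.compl).2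
        (aux_ind_mem hσ'D hσ'0 hCm.compl).1 (aux_ind_mem hσ'D hσ'0 hCm.compl).2 heqC').trans
        (𝔈.zero_one hθ hσ'D hσ'0 hC.compl))
  filter_upwards [e1, e2] with ω h1 h2
  by_cases hω : ω ∈ C
  · rw [Set.indicator_of_mem hω, Set.indicator_of_mem hω] at h1
    simp [hω, h1]
  · rw [Set.indicator_of_mem (Set.mem_compl hω), Set.indicator_of_mem (Set.mem_compl hω)] at h2
    simp [hω, h2]

lemma aux_paste_max {d : ℕ} {X : (Fin (d+1) → Ω → ℝ) → Ω → ℝ} (hX : DAdmissible 𝔈 X)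
    (hθ : Stop0 ℱ T θ) {σ σ' : Fin (d+1) → Ω → ℝ} (hσ : StopVec ℱ T θ σ)
    (hσ' : StopVec ℱ T θ σ') :
    ∃ ρ : Fin (d+1) → Ω → ℝ, StopVec ℱ T θ ρ ∧
      𝔈.cond θ (X ρ) =ᵐ[μ] fun ω => max (𝔈.cond θ (X σ) ω) (𝔈.cond θ (X σ') ω) := by
  obtain ⟨hσD, hσ0, -⟩ := hX.1 σ (aux_stopvec0 hθ hσ)
  obtain ⟨hσ'D, hσ'0, -⟩ := hX.1 σ' (aux_stopvec0 hθ hσ')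
  set C : Set Ω := {ω | 𝔈.cond θ (X σ') ω ≤ 𝔈.cond θ (X σ) ω} with hCdef
  have hC : MeasurableSet[hθ.1.measurableSpace] C :=
    measurableSet_le (𝔈.cond_adapted hθ hσ'D hσ'0) (𝔈.cond_adapted hθ hσD hσ0)
  obtain ⟨hvec, heq⟩ := aux_paste_cond hX hθ hσ hσ' hC
  refine ⟨_, hvec, heq.trans ?_⟩
  refine Filter.Eventually.of_forall fun ω => ?_
  dsimp only
  by_cases hω : ω ∈ C
  · rw [if_pos hω]; exact (max_eq_left hω).symm
  · rw [if_neg hω]; exact (max_eq_right (le_of_not_ge hω)).symm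

lemma aux_paste_max_ins {d : ℕ} {X : (Fin (d+1) → Ω → ℝ) → Ω → ℝ} (hX : DAdmissible 𝔈 X)
    (hθ : Stop0 ℱ T θ) (i : Fin (d+1)) {τ τ' : Fin d → Ω → ℝ}
    (hτ : StopVec ℱ T θ τ) (hτ' : StopVec ℱ T θ τ') :
    ∃ ρ : Fin d → Ω → ℝ, StopVec ℱ T θ ρ ∧
      𝔈.cond θ (X (i.insertNth θ ρ)) =ᵐ[μ]
        fun ω => max (𝔈.cond θ (X (i.insertNth θ τ)) ω) (𝔈.cond θ (X (i.insertNth θ τ')) ω) := by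
  obtain ⟨hσD, hσ0, -⟩ := hX.1 _ (aux_stopvec0 hθ (aux_ins_stopvec hθ i hτ))
  obtain ⟨hσ'D, hσ'0, -⟩ := hX.1 _ (aux_stopvec0 hθ (aux_ins_stopvec hθ i hτ'))
  set C : Set Ω :=
    {ω | 𝔈.cond θ (X (i.insertNth θ τ')) ω ≤ 𝔈.cond θ (X (i.insertNth θ τ)) ω} with hCdef
  have hC : MeasurableSet[hθ.1.measurableSpace] C :=
    measurableSet_le (𝔈.cond_adapted hθ hσ'D hσ'0) (𝔈.cond_adapted hθ hσD hσ0)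
  obtain ⟨hvec, heq⟩ :=
    aux_paste_cond hX hθ (aux_ins_stopvec hθ i hτ) (aux_ins_stopvec hθ i hτ') hC
  set ρ : Fin d → Ω → ℝ := fun k ω => if ω ∈ C then τ k ω else τ' k ω with hρdef
  have hkey : i.insertNth θ ρ
      = fun j ω => if ω ∈ C then (i.insertNth θ τ : Fin (d+1) → Ω → ℝ) j ω
          else (i.insertNth θ τ' : Fin (d+1) → Ω → ℝ) j ω := by
    funext j
    refine Fin.succAboveCases i ?_ ?_ j
    · simp [Fin.insertNth_apply_same]
    · intro k
      simp [Fin.insertNth_apply_succAbove, hρdef]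
  have hρvec : StopVec ℱ T θ ρ := fun k => aux_paste_stopIn hθ (hτ k) (hτ' k) hC
  refine ⟨ρ, hρvec, ?_⟩
  rw [hkey]
  refine heq.trans (Filter.Eventually.of_forall fun ω => ?_)
  dsimp only
  by_cases hω : ω ∈ C
  · rw [if_pos hω]; exact (max_eq_left hω).symm
  · rw [if_neg hω]; exact (max_eq_right (le_of_not_ge hω)).symm

lemma aux_fin_sup_succ {n : ℕ} (a : Fin (n+2) → ℝ) :
    (⨆ i, a i) = max (⨆ i : Fin (n+1), a i.castSucc) (a (Fin.last (n+1))) := by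
  apply le_antisymm
  · refine ciSup_le fun j => ?_
    refine Fin.lastCases ?_ ?_ j
    · exact le_max_right _ _
    · intro k
      exact le_trans (le_ciSup (f := fun i : Fin (n+1) => a i.castSucc)
        (Set.finite_range _).bddAbove k) (le_max_left _ _)
  · refine max_le (ciSup_le fun j => le_ciSup (Set.finite_range a).bddAbove j.castSucc)
      (le_ciSup (Set.finite_range a).bddAbove _)

lemma aux_tendsto_fin_sup : ∀ (n : ℕ) (f : ℕ → Fin (n+1) → ℝ) (L : Fin (n+1) → ℝ),
    (∀ i, Tendsto (fun k => f k i) atTop (nhds (L i))) →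
    Tendsto (fun k => ⨆ i, f k i) atTop (nhds (⨆ i, L i)) := by
  intro n
  induction n with
  | zero =>
      intro f L h
      have e : ∀ g : Fin (0+1) → ℝ, (⨆ i, g i) = g 0 := fun g =>
        le_antisymm (ciSup_le fun j => by rw [show j = 0 from Fin.ext (by omega)])
          (le_ciSup (Set.finite_range g).bddAbove 0)
      simp only [e]
      exact h 0
  | succ n ih =>
      intro f L h
      have hmax := (ih (fun k i => f k i.castSucc) (fun i => L i.castSucc)
        (fun i => h i.castSucc)).max (h (Fin.last _))
      simp only [aux_fin_sup_succ]
      exact hmax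

lemma aux_maxfold {G : Set (Ω → ℝ)}
    (hcl : ∀ f ∈ G, ∀ g ∈ G, ∃ p ∈ G, p =ᵐ[μ] fun ω => max (f ω) (g ω)) :
    ∀ (n : ℕ) (a : Fin (n+1) → Ω → ℝ), (∀ i, a i ∈ G) →
      ∃ q ∈ G, q =ᵐ[μ] fun ω => ⨆ i, a i ω := by
  intro n
  induction n with
  | zero =>
      intro a ha
      refine ⟨a 0, ha 0, Filter.Eventually.of_forall fun ω => ?_⟩
      show a 0 ω = ⨆ i, a i ω
      exact le_antisymm (le_ciSup (Set.finite_range fun i : Fin (0+1) => a i ω).bddAbove 0)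
        (ciSup_le fun j => by rw [show j = 0 from Fin.ext (by omega)])
  | succ n ih =>
      intro a ha
      obtain ⟨q, hqG, hq⟩ := ih (fun i => a i.castSucc) (fun i => ha _)
      obtain ⟨p, hpG, hp⟩ := hcl q hqG (a (Fin.last _)) (ha _)
      refine ⟨p, hpG, ?_⟩
      filter_upwards [hp, hq] with ω h1 h2
      rw [aux_fin_sup_succ (fun i => a i ω), h1, h2]

lemma aux_esssup_seq [IsProbabilityMeasure μ] {F : Set (Ω → ℝ)} (hne : F.Nonempty)
    (hmeas : ∀ f ∈ F, Measurable f) (hpos : ∀ f ∈ F, 0 ≤ᵐ[μ] f)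
    (hclosed : ∀ f ∈ F, ∀ g ∈ F, ∃ p ∈ F, p =ᵐ[μ] fun ω => max (f ω) (g ω))
    {u : Ω → ℝ} (hu : IsEssSupFam μ F u) :
    ∃ h : ℕ → Ω → ℝ, (∀ n, h n ∈ F) ∧
      ∀ᵐ ω ∂μ, (∀ n, h n ω ≤ h (n+1) ω) ∧ Tendsto (fun n => h n ω) atTop (nhds (u ω)) := by
  classical
  set α : ℝ → ℝ≥0∞ := fun x => ENNReal.ofReal (Real.arctan x) with hα
  have hαmono : Monotone α := fun x y hxy =>
    ENNReal.ofReal_le_ofReal (Real.arctan_strictMono.monotone hxy)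
  have hαcont : Continuous α := ENNReal.continuous_ofReal.comp Real.continuous_arctan
  have hαmeas : ∀ f ∈ F, Measurable fun ω => α (f ω) := fun f hf =>
    hαcont.measurable.comp (hmeas f hf)
  set I : (Ω → ℝ) → ℝ≥0∞ := fun f => ∫⁻ ω, α (f ω) ∂μ with hI
  have hIle : ∀ f : Ω → ℝ, I f ≤ ENNReal.ofReal (Real.pi / 2) := by
    intro f
    calc I f ≤ ∫⁻ _, ENNReal.ofReal (Real.pi / 2) ∂μ :=
          lintegral_mono fun ω => ENNReal.ofReal_le_ofReal (Real.arctan_lt_pi_div_two _).le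
    _ = ENNReal.ofReal (Real.pi / 2) := by simp
  set M : ℝ≥0∞ := ⨆ f ∈ F, I f with hM
  have hMle : M ≤ ENNReal.ofReal (Real.pi / 2) := iSup₂_le fun f _ => hIle f
  have hMtop : M ≠ ⊤ := (hMle.trans_lt ENNReal.ofReal_lt_top).ne
  have hIleM : ∀ f ∈ F, I f ≤ M := fun f hf => le_iSup₂ (f := fun f _ => I f) f hf
  have hfex : ∀ n : ℕ, ∃ f ∈ F, M - ((n : ℝ≥0∞)+1)⁻¹ ≤ I f := by
    intro n
    rcases eq_or_ne M 0 with h0 | h0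
    · obtain ⟨f, hf⟩ := hne
      exact ⟨f, hf, by simp [h0]⟩
    · have hlt : M - ((n : ℝ≥0∞)+1)⁻¹ < M := ENNReal.sub_lt_self hMtop h0 (by simp)
      rw [hM, lt_iSup_iff] at hlt
      obtain ⟨f, hf⟩ := hlt
      rw [lt_iSup_iff] at hf
      obtain ⟨hfF, hf⟩ := hf
      exact ⟨f, hfF, hf.le⟩
  choose f hfF hfI using hfex
  choose pst hpF hpeq using hclosed
  set h : ℕ → {g : Ω → ℝ // g ∈ F} :=
    fun n => Nat.rec (⟨f 0, hfF 0⟩ : {g : Ω → ℝ // g ∈ F})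
      (fun n q => ⟨pst q.1 q.2 (f (n+1)) (hfF (n+1)), hpF q.1 q.2 (f (n+1)) (hfF (n+1))⟩) n
    with hh
  have hstep : ∀ n, (h (n+1)).1 =ᵐ[μ] fun ω => max ((h n).1 ω) (f (n+1) ω) := fun n =>
    hpeq (h n).1 (h n).2 (f (n+1)) (hfF (n+1))
  have hub : ∀ n, (h n).1 ≤ᵐ[μ] u := fun n => hu.1 _ (h n).2
  have hpos' : ∀ n, 0 ≤ᵐ[μ] (h n).1 := fun n => hpos _ (h n).2
  have hflh : ∀ n, f n ≤ᵐ[μ] (h n).1 := by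
    intro n
    cases n with
    | zero => exact Filter.EventuallyLE.refl _ _
    | succ n =>
        exact Filter.EventuallyLE.trans
          (Filter.Eventually.of_forall fun ω => le_max_right ((h n).1 ω) (f (n+1) ω))
          (hstep n).symm.le
  -- the good a.e. set
  have hgood : ∀ᵐ ω ∂μ, (∀ n, (h n).1 ω ≤ max ((h n).1 ω) (f (n+1) ω)
        ∧ (h (n+1)).1 ω = max ((h n).1 ω) (f (n+1) ω))
      ∧ (∀ n, (h n).1 ω ≤ u ω) ∧ (∀ n, 0 ≤ (h n).1 ω) := by
    refine (ae_all_iff.2 fun n => ?_).and ((ae_all_iff.2 hub).and (ae_all_iff.2 hpos'))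
    filter_upwards [hstep n] with ω hω
    exact ⟨le_max_left _ _, hω⟩
  set G : Ω → ℝ := fun ω => ⨆ n, (h n).1 ω with hG
  have hGmeas : Measurable G := Measurable.iSup fun n => hmeas _ (h n).2
  have hmono_tendG : ∀ᵐ ω ∂μ, (∀ n, (h n).1 ω ≤ (h (n+1)).1 ω)
      ∧ Tendsto (fun n => (h n).1 ω) atTop (nhds (G ω)) ∧ G ω ≤ u ω ∧ 0 ≤ G ω := by
    filter_upwards [hgood] with ω hgw
    obtain ⟨h1, h2, h3⟩ := hgw
    have hmono : ∀ n, (h n).1 ω ≤ (h (n+1)).1 ω := fun n =>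
      le_of_le_of_eq (h1 n).1 (h1 n).2.symm
    have hbdd : BddAbove (Set.range fun n => (h n).1 ω) := by
      refine ⟨u ω, ?_⟩
      rintro x ⟨n, rfl⟩
      exact h2 n
    have htend : Tendsto (fun n => (h n).1 ω) atTop (nhds (G ω)) :=
      tendsto_atTop_ciSup (monotone_nat_of_le_succ hmono) hbdd
    exact ⟨hmono, htend, ciSup_le h2, (h3 0).trans (le_ciSup hbdd 0)⟩
  -- I G = M
  have hsupI : ∀ (g : Ω → ℝ), Measurable g → (∀ᵐ ω ∂μ,
        Monotone (fun n => (h n).1 ω) ∧ Tendsto (fun n => (h n).1 ω) atTop (nhds (G ω))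
          ∧ 0 ≤ g ω) →
      (∫⁻ ω, α (max (g ω) (G ω)) ∂μ) = ⨆ n, ∫⁻ ω, α (max (g ω) ((h n).1 ω)) ∂μ := by
    intro g hgmeas hae
    have key : ∀ᵐ ω ∂μ, (⨆ n, α (max (g ω) ((h n).1 ω))) = α (max (g ω) (G ω)) := by
      filter_upwards [hae] with ω hw
      obtain ⟨hmono, htend, -⟩ := hw
      have hmono2 : Monotone fun n => α (max (g ω) ((h n).1 ω)) := fun a b hab =>
        hαmono (max_le_max le_rfl (hmono hab))
      have htend2 : Tendsto (fun n => α (max (g ω) ((h n).1 ω))) atTop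
          (nhds (α (max (g ω) (G ω)))) :=
        (hαcont.tendsto _).comp ((tendsto_const_nhds.max htend))
      exact tendsto_nhds_unique (tendsto_atTop_iSup hmono2) htend2
    calc (∫⁻ ω, α (max (g ω) (G ω)) ∂μ)
        = ∫⁻ ω, ⨆ n, α (max (g ω) ((h n).1 ω)) ∂μ :=
          lintegral_congr_ae (key.mono fun ω hω => hω.symm)
      _ = ⨆ n, ∫⁻ ω, α (max (g ω) ((h n).1 ω)) ∂μ := by
          refine lintegral_iSup' (fun n => ?_) ?_
          · exact (hαcont.measurable.comp (hgmeas.max (hmeas _ (h n).2))).aemeasurable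
          · filter_upwards [hae] with ω hw
            obtain ⟨hmono, -, -⟩ := hw
            exact fun a b hab => hαmono (max_le_max le_rfl (hmono hab))
    -- done
  have haemono : ∀ᵐ ω ∂μ, Monotone (fun n => (h n).1 ω)
      ∧ Tendsto (fun n => (h n).1 ω) atTop (nhds (G ω)) ∧ 0 ≤ G ω := by
    filter_upwards [hmono_tendG] with ω hw
    obtain ⟨h1, h2, h3, h4⟩ := hw
    exact ⟨monotone_nat_of_le_succ h1, h2, h4⟩
  have hIG : (∫⁻ ω, α (G ω) ∂μ) = ⨆ n, I (h n).1 := by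
    have key : ∀ᵐ ω ∂μ, (⨆ n, α ((h n).1 ω)) = α (G ω) := by
      filter_upwards [haemono] with ω hw
      obtain ⟨h1, h2, -⟩ := hw
      exact tendsto_nhds_unique (tendsto_atTop_iSup (fun a b hab => hαmono (h1 hab)))
        ((hαcont.tendsto _).comp h2)
    calc (∫⁻ ω, α (G ω) ∂μ) = ∫⁻ ω, ⨆ n, α ((h n).1 ω) ∂μ :=
          lintegral_congr_ae (key.mono fun ω hω => hω.symm)
      _ = ⨆ n, I (h n).1 := by
          refine lintegral_iSup' (fun n => (hαmeas _ (h n).2).aemeasurable) ?_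
          filter_upwards [haemono] with ω hw
          obtain ⟨h1, -, -⟩ := hw
          exact fun a b hab => hαmono (h1 hab)
  have hsuphM : (⨆ n, I (h n).1) = M := by
    apply le_antisymm (iSup_le fun n => hIleM _ (h n).2)
    refine ENNReal.le_of_forall_pos_le_add fun ε hε _ => ?_
    obtain ⟨n, hn⟩ := ENNReal.exists_inv_nat_lt
      (a := (ε : ℝ≥0∞)) (by exact_mod_cast hε.ne')
    have h1 : M - ((n : ℝ≥0∞)+1)⁻¹ ≤ I (f n) := hfI n
    have h2 : I (f n) ≤ I (h n).1 :=
      lintegral_mono_ae ((hflh n).mono fun ω hω => hαmono hω)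
    have h3 : M ≤ I (h n).1 + ((n : ℝ≥0∞)+1)⁻¹ :=
      tsub_le_iff_right.mp (h1.trans h2)
    refine h3.trans (add_le_add (le_iSup (fun n => I (h n).1) n) ?_)
    exact le_of_lt (lt_of_le_of_lt (ENNReal.inv_le_inv.2 (by simp)) hn)
  have hIGM : (∫⁻ ω, α (G ω) ∂μ) = M := hIG.trans hsuphM
  -- G is an a.e. upper bound for F
  have hGub : ∀ g ∈ F, g ≤ᵐ[μ] G := by
    intro g hgF
    have haemono' : ∀ᵐ ω ∂μ, Monotone (fun n => (h n).1 ω)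
        ∧ Tendsto (fun n => (h n).1 ω) atTop (nhds (G ω)) ∧ 0 ≤ g ω := by
      filter_upwards [haemono, hpos g hgF] with ω hw h4
      obtain ⟨h1, h2, _⟩ := hw
      exact ⟨h1, h2, h4⟩
    have hle : (∫⁻ ω, α (max (g ω) (G ω)) ∂μ) ≤ M := by
      rw [hsupI g (hmeas g hgF) haemono']
      refine iSup_le fun n => ?_
      have hq := hpeq g hgF (h n).1 (h n).2
      calc (∫⁻ ω, α (max (g ω) ((h n).1 ω)) ∂μ)
          = I (pst g hgF (h n).1 (h n).2) :=
            (lintegral_congr_ae (hq.mono fun ω hω => by rw [hω])).symm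
        _ ≤ M := hIleM _ (hpF g hgF (h n).1 (h n).2)
    have hmeasmax : AEMeasurable (fun ω => α (max (g ω) (G ω))) μ :=
      (hαcont.measurable.comp ((hmeas g hgF).max hGmeas)).aemeasurable
    have haeeq : (fun ω => α (G ω)) =ᵐ[μ] fun ω => α (max (g ω) (G ω)) := by
      refine ae_eq_of_ae_le_of_lintegral_le
        (Filter.Eventually.of_forall fun ω => hαmono (le_max_right _ _))
        (by rw [hIGM]; exact hMtop) hmeasmax (by rw [hIGM]; exact hle)
    filter_upwards [haeeq, hpos g hgF, hmono_tendG] with ω h1 h2 hw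
    obtain ⟨-, -, -, h4⟩ := hw
    have harct : Real.arctan (G ω) = Real.arctan (max (g ω) (G ω)) := by
      have h0 : 0 ≤ Real.arctan (G ω) := by
        rw [← Real.arctan_zero]
        exact Real.arctan_strictMono.monotone h4
      have h0' : 0 ≤ Real.arctan (max (g ω) (G ω)) := by
        rw [← Real.arctan_zero]
        exact Real.arctan_strictMono.monotone (le_trans h4 (le_max_right _ _))
      exact (ENNReal.ofReal_eq_ofReal_iff h0 h0').mp h1
    have : G ω = max (g ω) (G ω) := Real.arctan_injective harct
    exact max_eq_right_iff.mp this.symm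
  have hules : u ≤ᵐ[μ] G := hu.2 G hGub
  have hGu : G =ᵐ[μ] u := by
    refine Filter.EventuallyLE.antisymm ?_ hules
    filter_upwards [hmono_tendG] with ω hw
    obtain ⟨-, -, h3, -⟩ := hw
    exact h3
  refine ⟨fun n => (h n).1, fun n => (h n).2, ?_⟩
  filter_upwards [hmono_tendG, hGu] with ω hw h5
  obtain ⟨h1, h2, -, -⟩ := hw
  exact ⟨h1, h5 ▸ h2⟩

lemma aux_condH1 [IsProbabilityMeasure μ] (hT : 0 ≤ T) (hS : Stop0 ℱ T S)
    (hξ : ξ ∈ 𝔈.Dom) (hξ0 : 0 ≤ᵐ[μ] ξ) {A : ℕ → Set Ω} (hA : ∀ n, MeasurableSet (A n))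
    (hAmono : Monotone A) (hAcov : ∀ᵐ ω ∂μ, ω ∈ ⋃ n, A n) :
    𝔈.cond S ξ ≤ᵐ[μ] fun ω => ⨆ n, 𝔈.cond S ((A n).indicator ξ) ω := by
  classical
  set g : Ω → ℝ := 𝔈.cond S ξ with hg
  set gn : ℕ → Ω → ℝ := fun n => 𝔈.cond S ((A n).indicator ξ) with hgndef
  have hindD : ∀ n, (A n).indicator ξ ∈ 𝔈.Dom := fun n => (aux_ind_mem hξ hξ0 (hA n)).1
  have hind0 : ∀ n, 0 ≤ᵐ[μ] (A n).indicator ξ := fun n => (aux_ind_mem hξ hξ0 (hA n)).2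
  have hgD : g ∈ 𝔈.Dom := 𝔈.cond_mem hS hξ hξ0
  have hg0 : 0 ≤ᵐ[μ] g := 𝔈.cond_nonneg hS hξ hξ0
  have hgnle : ∀ n, gn n ≤ᵐ[μ] g := by
    intro n
    refine 𝔈.mono hS (hindD n) (hind0 n) hξ hξ0 ?_
    filter_upwards [hξ0] with ω h0
    by_cases hω : ω ∈ A n
    · rw [Set.indicator_of_mem hω]
    · rw [Set.indicator_of_notMem hω]; exact h0
  set G' : Ω → ℝ := fun ω => ⨆ n, gn n ω with hG'def
  have hG'measS : Measurable[hS.1.measurableSpace] G' :=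
    Measurable.iSup fun n => 𝔈.cond_adapted hS (hindD n) (hind0 n)
  have hgmeasS : Measurable[hS.1.measurableSpace] g := 𝔈.cond_adapted hS hξ hξ0
  have hDnull : ∀ k : ℕ, ∀ᵐ ω ∂μ, ¬ (G' ω + 1/(k+1 : ℝ) ≤ g ω) := by
    intro k
    set δ : ℝ := 1/(k+1 : ℝ) with hδdef
    have hδpos : 0 < δ := by positivity
    set D : Set Ω := {ω | G' ω + δ ≤ g ω} with hDdef
    have hDS : MeasurableSet[hS.1.measurableSpace] D :=
      measurableSet_le (hG'measS.add measurable_const) hgmeasS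
    have hDm : MeasurableSet D := hS.1.measurableSpace_le _ hDS
    have hconstD : (fun _ : Ω => δ) ∈ 𝔈.Dom := 𝔈.const_mem δ
    have hiDdD : D.indicator (fun _ => δ) ∈ 𝔈.Dom := 𝔈.indicator_mem hconstD hDm
    have hiDd0 : 0 ≤ᵐ[μ] D.indicator (fun _ => δ) :=
      Filter.Eventually.of_forall fun ω => Set.indicator_apply_nonneg fun _ => hδpos.le
    set ζ' : Ω → ℝ := D.indicator ξ + D.indicator (fun _ => δ) with hζ'def
    have hiDxD := aux_ind_mem hξ hξ0 hDm
    have hζ'D : ζ' ∈ 𝔈.Dom := 𝔈.add_mem hiDxD.1 hiDdD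
    have hζ'0 : 0 ≤ᵐ[μ] ζ' := by
      filter_upwards [hiDxD.2, hiDd0] with ω h1 h2
      exact add_nonneg h1 h2
    -- the eta_n and their bound
    have hEle : ∀ n, 𝔈.E0 ((A n).indicator ζ') ≤ 𝔈.E0 (D.indicator ξ) := by
      intro n
      set ηn : Ω → ℝ := D.indicator ((A n).indicator ξ) + D.indicator (fun _ => δ)
        with hηdef
      have hiDAD := aux_ind_mem (hindD n) (hind0 n) hDm
      have hηD : ηn ∈ 𝔈.Dom := 𝔈.add_mem hiDAD.1 hiDdD
      have hη0 : 0 ≤ᵐ[μ] ηn := by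
        filter_upwards [hiDAD.2, hiDd0] with ω h1 h2
        exact add_nonneg h1 h2
      have hmeasδ : Measurable[hS.1.measurableSpace] (D.indicator (fun _ : Ω => δ)) :=
        measurable_const.indicator hDS
      have e_a : 𝔈.cond S ηn =ᵐ[μ] 𝔈.cond S (D.indicator ((A n).indicator ξ))
          + D.indicator (fun _ => δ) :=
        𝔈.translation hS hiDAD.1 hiDAD.2 hiDdD hiDd0 hmeasδ
      have e_b : 𝔈.cond S (D.indicator ((A n).indicator ξ)) =ᵐ[μ] D.indicator (gn n) :=
        𝔈.zero_one hS (hindD n) (hind0 n) hDS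
      have e_d : 𝔈.cond S (D.indicator ξ) =ᵐ[μ] D.indicator g := 𝔈.zero_one hS hξ hξ0 hDS
      have e_c : (fun ω => D.indicator (gn n) ω + D.indicator (fun _ => δ) ω)
          ≤ᵐ[μ] D.indicator g := by
        filter_upwards [ae_all_iff.2 hgnle] with ω hble
        by_cases hω : ω ∈ D
        · rw [Set.indicator_of_mem hω, Set.indicator_of_mem hω, Set.indicator_of_mem hω]
          have hbdd : BddAbove (Set.range fun j => gn j ω) := by
            refine ⟨g ω, ?_⟩
            rintro x ⟨j, rfl⟩
            exact hble j
          have h1 : gn n ω ≤ G' ω := le_ciSup hbdd n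
          have h2 : G' ω + δ ≤ g ω := hω
          linarith
        · rw [Set.indicator_of_notMem hω, Set.indicator_of_notMem hω,
            Set.indicator_of_notMem hω]
          simp
      have hchain : 𝔈.cond S ηn ≤ᵐ[μ] 𝔈.cond S (D.indicator ξ) := by
        calc 𝔈.cond S ηn =ᵐ[μ] 𝔈.cond S (D.indicator ((A n).indicator ξ))
              + D.indicator (fun _ => δ) := e_a
          _ =ᵐ[μ] fun ω => D.indicator (gn n) ω + D.indicator (fun _ => δ) ω :=
              e_b.add (Filter.EventuallyEq.refl _ _)
          _ ≤ᵐ[μ] D.indicator g := e_c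
          _ =ᵐ[μ] 𝔈.cond S (D.indicator ξ) := e_d.symm
      have hE0chain : 𝔈.E0 ηn ≤ 𝔈.E0 (D.indicator ξ) := by
        have h1 := aux_E0_cond (𝔈 := 𝔈) hT hS hηD hη0
        have h2 := aux_E0_cond (𝔈 := 𝔈) hT hS hiDxD.1 hiDxD.2
        rw [← h1, ← h2]
        exact aux_E0_mono hT (𝔈.cond_mem hS hηD hη0) (𝔈.cond_nonneg hS hηD hη0)
          (𝔈.cond_mem hS hiDxD.1 hiDxD.2) (𝔈.cond_nonneg hS hiDxD.1 hiDxD.2) hchain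
      have hlow : (A n).indicator ζ' ≤ᵐ[μ] ηn := by
        filter_upwards [hξ0] with ω h0
        by_cases hωA : ω ∈ A n
        · rw [Set.indicator_of_mem hωA]
          have : D.indicator ((A n).indicator ξ) ω = D.indicator ξ ω := by
            by_cases hωD : ω ∈ D
            · rw [Set.indicator_of_mem hωD, Set.indicator_of_mem hωD,
                Set.indicator_of_mem hωA]
            · rw [Set.indicator_of_notMem hωD, Set.indicator_of_notMem hωD]
          show ζ' ω ≤ ηn ω
          rw [hζ'def, hηdef]
          simp only [Pi.add_apply, this]
          exact le_rfl
        · rw [Set.indicator_of_notMem hωA]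
          have h1 : 0 ≤ D.indicator ((A n).indicator ξ) ω :=
            Set.indicator_apply_nonneg fun _ =>
              Set.indicator_apply_nonneg fun _ => h0
          have h2 : 0 ≤ D.indicator (fun _ : Ω => δ) ω :=
            Set.indicator_apply_nonneg fun _ => hδpos.le
          show (0:ℝ) ≤ ηn ω
          rw [hηdef]
          exact add_nonneg h1 h2
      have hAζ := aux_ind_mem hζ'D hζ'0 (hA n)
      exact le_trans (aux_E0_mono hT hAζ.1 hAζ.2 hηD hη0 hlow) hE0chain
    have htendH1 := 𝔈.h1 hζ'D hζ'0 hA hAmono hAcov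
    have hE0le : 𝔈.E0 ζ' ≤ 𝔈.E0 (D.indicator ξ) :=
      le_of_tendsto htendH1 (Filter.Eventually.of_forall hEle)
    have hE0ge : 𝔈.E0 (D.indicator ξ) ≤ 𝔈.E0 ζ' := by
      refine aux_E0_mono hT hiDxD.1 hiDxD.2 hζ'D hζ'0 ?_
      refine Filter.Eventually.of_forall fun ω => ?_
      have : 0 ≤ D.indicator (fun _ : Ω => δ) ω :=
        Set.indicator_apply_nonneg fun _ => hδpos.le
      show D.indicator ξ ω ≤ D.indicator ξ ω + D.indicator (fun _ => δ) ω
      linarith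
    have hE0eq : 𝔈.E0 (D.indicator ξ) = 𝔈.E0 ζ' := le_antisymm hE0ge hE0le
    have hcond0eq : 𝔈.cond (fun _ => (0:ℝ)) (D.indicator ξ)
        =ᵐ[μ] 𝔈.cond (fun _ => (0:ℝ)) ζ' := by
      refine (𝔈.E0_eq hiDxD.1 hiDxD.2).trans ?_
      rw [hE0eq]
      exact (𝔈.E0_eq hζ'D hζ'0).symm
    have hindeq : D.indicator ξ =ᵐ[μ] ζ' := by
      refine 𝔈.strict_mono (aux_stop0_zero hT) hiDxD.1 hiDxD.2 hζ'D hζ'0 ?_ hcond0eq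
      refine Filter.Eventually.of_forall fun ω => ?_
      have : 0 ≤ D.indicator (fun _ : Ω => δ) ω :=
        Set.indicator_apply_nonneg fun _ => hδpos.le
      show D.indicator ξ ω ≤ D.indicator ξ ω + D.indicator (fun _ => δ) ω
      linarith
    filter_upwards [hindeq] with ω hω
    intro hcontra
    have hωD : ω ∈ D := hcontra
    have : D.indicator ξ ω = D.indicator ξ ω + D.indicator (fun _ => δ) ω := hω
    rw [Set.indicator_of_mem hωD (f := fun _ => δ)] at this
    linarith
  have htend : ∀ ω : Ω, Tendsto (fun k : ℕ => G' ω + 1/(k+1 : ℝ)) atTop (nhds (G' ω)) := by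
    intro ω
    have := tendsto_one_div_add_atTop_nhds_zero_nat (𝕜 := ℝ)
    have h2 := tendsto_const_nhds (x := G' ω) (f := atTop (α := ℕ)) |>.add this
    simpa using h2
  filter_upwards [ae_all_iff.2 hDnull] with ω hω
  have : ∀ k : ℕ, g ω ≤ G' ω + 1/(k+1 : ℝ) := fun k => (lt_of_not_ge (hω k)).le
  exact ge_of_tendsto (htend ω) (Filter.Eventually.of_forall this)

lemma aux_condle [IsProbabilityMeasure μ] (hT : 0 ≤ T) (hS : Stop0 ℱ T S)
    (hξm : Measurable ξ) (hξD : ξ ∈ 𝔈.Dom) (hξ0 : 0 ≤ᵐ[μ] ξ)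
    {ζ : ℕ → Ω → ℝ} (hζm : ∀ n, Measurable (ζ n)) (hζD : ∀ n, ζ n ∈ 𝔈.Dom)
    (hζ0 : ∀ n, 0 ≤ᵐ[μ] ζ n)
    (hmt : ∀ᵐ ω ∂μ, (∀ n, ζ n ω ≤ ζ (n+1) ω) ∧ Tendsto (fun n => ζ n ω) atTop (nhds (ξ ω)))
    {V : Ω → ℝ} (hV : ∀ n, 𝔈.cond S (ζ n) ≤ᵐ[μ] V) :
    𝔈.cond S ξ ≤ᵐ[μ] V := by
  classical
  -- bad set N
  have hallnull : μ {ω | ¬ ((∀ n, ζ n ω ≤ ζ (n+1) ω)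
      ∧ Tendsto (fun n => ζ n ω) atTop (nhds (ξ ω)) ∧ ∀ n, 0 ≤ ζ n ω)} = 0 := by
    have hall : ∀ᵐ ω ∂μ, (∀ n, ζ n ω ≤ ζ (n+1) ω)
        ∧ Tendsto (fun n => ζ n ω) atTop (nhds (ξ ω)) ∧ ∀ n, 0 ≤ ζ n ω := by
      filter_upwards [hmt, ae_all_iff.2 hζ0] with ω h1 h2
      exact ⟨h1.1, h1.2, h2⟩
    rw [MeasureTheory.ae_iff] at hall
    exact hall
  obtain ⟨N, hNsub, hNm, hNnull⟩ := exists_measurable_superset_of_null hallnull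
  have key : ∀ k : ℕ, 𝔈.cond S ξ ≤ᵐ[μ] fun ω => V ω + 1/(k+1 : ℝ) := by
    intro k
    set ε : ℝ := 1/(k+1 : ℝ) with hεdef
    have hεpos : 0 < ε := by positivity
    set A : ℕ → Set Ω := fun n => N ∪ {ω | ξ ω ≤ ζ n ω + ε} with hAdef
    have hAm : ∀ n, MeasurableSet (A n) := fun n =>
      hNm.union (measurableSet_le hξm ((hζm n).add measurable_const))
    have hAmono : Monotone A := by
      intro a b hab ω hω
      rcases hω with hω | hω
      · exact Or.inl hω
      · by_cases hωN : ω ∈ N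
        · exact Or.inl hωN
        · have hgood : (∀ n, ζ n ω ≤ ζ (n+1) ω)
              ∧ Tendsto (fun n => ζ n ω) atTop (nhds (ξ ω)) ∧ ∀ n, 0 ≤ ζ n ω := by
            by_contra hcon
            exact hωN (hNsub hcon)
          have hm : Monotone fun n => ζ n ω := monotone_nat_of_le_succ hgood.1
          have hζab : ζ a ω ≤ ζ b ω := hm hab
          have hωs : ξ ω ≤ ζ a ω + ε := hω
          exact Or.inr (show ξ ω ≤ ζ b ω + ε by linarith)
    have hAcov : ∀ᵐ ω ∂μ, ω ∈ ⋃ n, A n := by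
      refine Filter.Eventually.of_forall fun ω => ?_
      by_cases hωN : ω ∈ N
      · exact Set.mem_iUnion.2 ⟨0, Or.inl hωN⟩
      · have hgood : (∀ n, ζ n ω ≤ ζ (n+1) ω)
            ∧ Tendsto (fun n => ζ n ω) atTop (nhds (ξ ω)) ∧ ∀ n, 0 ≤ ζ n ω := by
          by_contra hcon
          exact hωN (hNsub hcon)
        obtain ⟨n, hn⟩ := (hgood.2.1.eventually (eventually_ge_nhds
          (show ξ ω - ε < ξ ω by linarith))).exists
        exact Set.mem_iUnion.2 ⟨n, Or.inr (by simp only [Set.mem_setOf_eq]; linarith)⟩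
    have hindle : ∀ n, 𝔈.cond S ((A n).indicator ξ) ≤ᵐ[μ] fun ω => V ω + ε := by
      intro n
      have hζεD : (fun ω => ζ n ω + ε) ∈ 𝔈.Dom := 𝔈.add_mem (hζD n) (𝔈.const_mem ε)
      have hζε0 : 0 ≤ᵐ[μ] fun ω => ζ n ω + ε := by
        filter_upwards [hζ0 n] with ω h0
        have := hεpos
        simp only [Pi.zero_apply] at h0 ⊢
        linarith
      have hle1 : (A n).indicator ξ ≤ᵐ[μ] fun ω => ζ n ω + ε := by
        have hNae : ∀ᵐ ω ∂μ, ω ∉ N := by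
          rw [MeasureTheory.ae_iff]
          simpa using hNnull
        filter_upwards [hNae, hζ0 n] with ω hωN h0
        by_cases hωA : ω ∈ A n
        · rw [Set.indicator_of_mem hωA]
          rcases hωA with hωA | hωA
          · exact absurd hωA hωN
          · exact hωA
        · rw [Set.indicator_of_notMem hωA]
          have := hεpos
          simp only [Pi.zero_apply] at h0
          linarith
      have hm1 := 𝔈.mono hS (aux_ind_mem hξD hξ0 (hAm n)).1 (aux_ind_mem hξD hξ0 (hAm n)).2
        hζεD hζε0 hle1
      have ht1 : 𝔈.cond S (fun ω => ζ n ω + ε) =ᵐ[μ] fun ω => 𝔈.cond S (ζ n) ω + ε := by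
        have := 𝔈.translation hS (hζD n) (hζ0 n) (𝔈.const_mem ε)
          (Filter.Eventually.of_forall fun _ => hεpos.le) measurable_const
        exact this
      filter_upwards [hm1, ht1, hV n] with ω h1 h2 h3
      calc 𝔈.cond S ((A n).indicator ξ) ω ≤ 𝔈.cond S (fun ω => ζ n ω + ε) ω := h1
        _ = 𝔈.cond S (ζ n) ω + ε := h2
        _ ≤ V ω + ε := by linarith
    have hH1 := aux_condH1 hT hS hξD hξ0 hAm hAmono hAcov
    filter_upwards [hH1, ae_all_iff.2 hindle] with ω h1 h2
    refine le_trans h1 (ciSup_le fun n => h2 n)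
  have htend : ∀ ω : Ω, Tendsto (fun k : ℕ => V ω + 1/(k+1 : ℝ)) atTop (nhds (V ω)) := by
    intro ω
    have h2 := tendsto_const_nhds (x := V ω) (f := atTop (α := ℕ))
      |>.add tendsto_one_div_add_atTop_nhds_zero_nat
    simpa using h2
  filter_upwards [ae_all_iff.2 key] with ω hω
  exact ge_of_tendsto (htend ω) (Filter.Eventually.of_forall fun k => hω k)

lemma aux_seq [IsProbabilityMeasure μ] (hT : 0 < T) {d : ℕ}
    {X : (Fin (d+1) → Ω → ℝ) → Ω → ℝ} (hX : DAdmissible 𝔈 X)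
    {ui : Fin (d+1) → (Ω → ℝ) → Ω → ℝ} (hui : IsUi 𝔈 X ui)
    {θ : Ω → ℝ} (hθ : Stop0 ℱ T θ) :
    ∃ ζ : ℕ → Ω → ℝ,
      (∀ n, ∃ σ : Fin (d+1) → Ω → ℝ, StopVec ℱ T θ σ ∧ ζ n = 𝔈.cond θ (X σ)) ∧
      ∀ᵐ ω ∂μ, (∀ n, ζ n ω ≤ ζ (n+1) ω) ∧
        Tendsto (fun n => ζ n ω) atTop (nhds (⨆ i, ui i θ ω)) := by
  classical
  have hXD : ∀ σ : Fin (d+1) → Ω → ℝ, StopVec ℱ T θ σ → X σ ∈ 𝔈.Dom ∧ 0 ≤ᵐ[μ] X σ :=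
    fun σ hσ => ⟨(hX.1 σ (aux_stopvec0 hθ hσ)).1, (hX.1 σ (aux_stopvec0 hθ hσ)).2.1⟩
  set Fi : Fin (d+1) → Set (Ω → ℝ) := fun i =>
    {g | ∃ τ : Fin d → Ω → ℝ, StopVec ℱ T θ τ ∧ g = 𝔈.cond θ (X (i.insertNth θ τ))} with hFi
  have hτ0 : StopVec ℱ T θ (fun _ : Fin d => θ) := fun _ => aux_stopIn_self hθ
  have hFine : ∀ i, (Fi i).Nonempty := fun i => ⟨_, ⟨_, hτ0, rfl⟩⟩
  have hmeasi : ∀ i, ∀ g ∈ Fi i, Measurable g := by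
    rintro i g ⟨τ, hτ, rfl⟩
    have hD := hXD _ (aux_ins_stopvec hθ i hτ)
    exact aux_cond_meas hθ hD.1 hD.2
  have hposi : ∀ i, ∀ g ∈ Fi i, 0 ≤ᵐ[μ] g := by
    rintro i g ⟨τ, hτ, rfl⟩
    have hD := hXD _ (aux_ins_stopvec hθ i hτ)
    exact 𝔈.cond_nonneg hθ hD.1 hD.2
  have hcli : ∀ i, ∀ f ∈ Fi i, ∀ g ∈ Fi i, ∃ p ∈ Fi i, p =ᵐ[μ] fun ω => max (f ω) (g ω) := by
    rintro i f ⟨τ, hτ, rfl⟩ g ⟨τ', hτ', rfl⟩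
    obtain ⟨ρ, hρ, heq⟩ := aux_paste_max_ins hX hθ i hτ hτ'
    exact ⟨_, ⟨ρ, hρ, rfl⟩, heq⟩
  have H : ∀ i : Fin (d+1), ∃ h : ℕ → Ω → ℝ, (∀ n, h n ∈ Fi i) ∧
      ∀ᵐ ω ∂μ, (∀ n, h n ω ≤ h (n+1) ω)
        ∧ Tendsto (fun n => h n ω) atTop (nhds (ui i θ ω)) :=
    fun i => aux_esssup_seq (hFine i) (hmeasi i) (hposi i) (hcli i) (hui i θ hθ)
  choose h hF hae using H
  set G : Set (Ω → ℝ) := {g | ∃ σ : Fin (d+1) → Ω → ℝ,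
    StopVec ℱ T θ σ ∧ g = 𝔈.cond θ (X σ)} with hGdef
  have hGcl : ∀ f ∈ G, ∀ g ∈ G, ∃ p ∈ G, p =ᵐ[μ] fun ω => max (f ω) (g ω) := by
    rintro f ⟨σ, hσ, rfl⟩ g ⟨σ', hσ', rfl⟩
    obtain ⟨ρ, hρ, heq⟩ := aux_paste_max hX hθ hσ hσ'
    exact ⟨_, ⟨ρ, hρ, rfl⟩, heq⟩
  have hFiG : ∀ i, ∀ g ∈ Fi i, g ∈ G := by
    rintro i g ⟨τ, hτ, rfl⟩
    exact ⟨_, aux_ins_stopvec hθ i hτ, rfl⟩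
  have Hq : ∀ n, ∃ q ∈ G, q =ᵐ[μ] fun ω => ⨆ i, h i n ω :=
    fun n => aux_maxfold hGcl d (fun i => h i n) (fun i => hFiG i _ (hF i n))
  choose q hqG hqeq using Hq
  refine ⟨q, fun n => hqG n, ?_⟩
  filter_upwards [ae_all_iff.2 hae, ae_all_iff.2 hqeq] with ω h1 h2
  constructor
  · intro n
    rw [h2 n, h2 (n+1)]
    exact ciSup_mono (Set.finite_range _).bddAbove fun i => (h1 i).1 n
  · have htend := aux_tendsto_fin_sup d (fun n i => h i n ω) (fun i => ui i θ ω)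
      (fun i => (h1 i).2)
    exact htend.congr fun n => (h2 n).symm

lemma aux_master [IsProbabilityMeasure μ] (hT : 0 < T) {d : ℕ}
    {X : (Fin (d+1) → Ω → ℝ) → Ω → ℝ} (hX : DAdmissible 𝔈 X) (hbdd : BddRewardDE0 𝔈 X)
    {ui : Fin (d+1) → (Ω → ℝ) → Ω → ℝ} (hui : IsUi 𝔈 X ui)
    {θ : Ω → ℝ} (hθ : Stop0 ℱ T θ) :
    (fun ω => ⨆ i, ui i θ ω) ∈ 𝔈.Dom ∧ (0 ≤ᵐ[μ] fun ω => ⨆ i, ui i θ ω) ∧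
      ∀ (S V : Ω → ℝ), Stop0 ℱ T S → (∀ ω, S ω ≤ θ ω) →
        (∀ σ : Fin (d+1) → Ω → ℝ, StopVec ℱ T S σ → 𝔈.cond S (X σ) ≤ᵐ[μ] V) →
        𝔈.cond S (fun ω => ⨆ i, ui i θ ω) ≤ᵐ[μ] V := by
  classical
  have hXD : ∀ σ : Fin (d+1) → Ω → ℝ, StopVec ℱ T θ σ → X σ ∈ 𝔈.Dom ∧ 0 ≤ᵐ[μ] X σ :=
    fun σ hσ => ⟨(hX.1 σ (aux_stopvec0 hθ hσ)).1, (hX.1 σ (aux_stopvec0 hθ hσ)).2.1⟩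
  obtain ⟨ζ, hζfm, hζae⟩ := aux_seq hT hX hui hθ
  choose σs hσvec hσeq using hζfm
  obtain ⟨C, hC⟩ := hbdd
  set L : Ω → ℝ := fun ω => ⨆ i, ui i θ ω with hLdef
  have hζD : ∀ n, ζ n ∈ 𝔈.Dom := fun n => by
    rw [hσeq n]
    exact 𝔈.cond_mem hθ (hXD _ (hσvec n)).1 (hXD _ (hσvec n)).2
  have hζ0 : ∀ n, 0 ≤ᵐ[μ] ζ n := fun n => by
    rw [hσeq n]
    exact 𝔈.cond_nonneg hθ (hXD _ (hσvec n)).1 (hXD _ (hσvec n)).2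
  have hζm : ∀ n, Measurable (ζ n) := fun n => by
    rw [hσeq n]
    exact aux_cond_meas hθ (hXD _ (hσvec n)).1 (hXD _ (hσvec n)).2
  have hE0b : ∀ n, 𝔈.E0 (ζ n) ≤ C := fun n => by
    rw [hσeq n, aux_E0_cond hT.le hθ (hXD _ (hσvec n)).1 (hXD _ (hσvec n)).2]
    exact hC _ (aux_stopvec0 hθ (hσvec n))
  have hLD : L ∈ 𝔈.Dom :=
    𝔈.h5 hζD hζ0 (hζae.mono fun ω hw => hw.2)
      ⟨C, Filter.Frequently.of_forall fun n => hE0b n⟩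
  have hL0 : 0 ≤ᵐ[μ] L := by
    filter_upwards [hζae, hζ0 0] with ω h1 h2
    have hm : Monotone fun n => ζ n ω := monotone_nat_of_le_succ h1.1
    simp only [Pi.zero_apply] at h2 ⊢
    exact ge_of_tendsto h1.2 (Filter.Eventually.of_forall fun n =>
      h2.trans (hm (Nat.zero_le n)))
  refine ⟨hLD, hL0, ?_⟩
  intro S V hS hSθ hV
  set ξ' : Ω → ℝ := fun ω => ⨆ n, ζ n ω with hξ'def
  have hξ'm : Measurable ξ' := Measurable.iSup hζm
  have hae' : ∀ᵐ ω ∂μ, (∀ n, ζ n ω ≤ ζ (n+1) ω)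
      ∧ Tendsto (fun n => ζ n ω) atTop (nhds (ξ' ω)) ∧ ξ' ω = L ω := by
    filter_upwards [hζae] with ω hw
    have hm : Monotone fun n => ζ n ω := monotone_nat_of_le_succ hw.1
    have hbdd2 : BddAbove (Set.range fun n => ζ n ω) := by
      refine ⟨L ω, ?_⟩
      rintro x ⟨n, rfl⟩
      exact hm.ge_of_tendsto hw.2 n
    have htend2 : Tendsto (fun n => ζ n ω) atTop (nhds (ξ' ω)) :=
      tendsto_atTop_ciSup hm hbdd2
    exact ⟨hw.1, htend2, tendsto_nhds_unique htend2 hw.2⟩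
  have hξ'D : ξ' ∈ 𝔈.Dom :=
    𝔈.h5 hζD hζ0 (hae'.mono fun ω hw => hw.2.1)
      ⟨C, Filter.Frequently.of_forall fun n => hE0b n⟩
  have hξ'0 : 0 ≤ᵐ[μ] ξ' := by
    filter_upwards [hL0, hae'] with ω h1 h2
    simp only [Pi.zero_apply] at h1 ⊢
    rw [h2.2.2]
    exact h1
  have hVn : ∀ n, 𝔈.cond S (ζ n) ≤ᵐ[μ] V := by
    intro n
    have hσS : StopVec ℱ T S (σs n) := fun j =>
      ⟨(hσvec n j).1, fun ω => (hSθ ω).trans ((hσvec n j).2.1 ω), (hσvec n j).2.2⟩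
    have htc := 𝔈.time_consistent hS hθ hSθ (hXD _ (hσvec n)).1 (hXD _ (hσvec n)).2
    rw [hσeq n]
    exact htc.le.trans (hV _ hσS)
  have hmain : 𝔈.cond S ξ' ≤ᵐ[μ] V :=
    aux_condle hT.le hS hξ'm hξ'D hξ'0 hζm hζD hζ0
      (hae'.mono fun ω hw => ⟨hw.1, hw.2.1⟩) hVn
  have hcongr : 𝔈.cond S L =ᵐ[μ] 𝔈.cond S ξ' :=
    aux_cond_congr hS hLD hL0 hξ'D hξ'0 (hae'.mono fun ω hw => hw.2.2.symm)
  exact hcongr.le.trans hmain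

end AuxProof
set_option maxHeartbeats 1000000

/-- reduction of the `d`-stopping problem to a single stopping
problem: `v(S) = u(S)` a.s. -/
theorem dStopping_eq_single [IsProbabilityMeasure μ] (hT : 0 < T) (𝔈 : FExp μ T ℱ)
    (d : ℕ) (X : (Fin (d + 1) → Ω → ℝ) → Ω → ℝ)
    (hX : DAdmissible 𝔈 X) (hbdd : BddRewardDE0 𝔈 X)
    (v : (Ω → ℝ) → Ω → ℝ) (hv : IsValueFamD 𝔈 X v)
    (ui : Fin (d + 1) → (Ω → ℝ) → Ω → ℝ) (hui : IsUi 𝔈 X ui)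
    (Xh u : (Ω → ℝ) → Ω → ℝ)
    (hXh : ∀ θ : Ω → ℝ, Xh θ = fun ω => ⨆ i, ui i θ ω)
    (hu : IsValueFam 𝔈 Xh u) :
    ∀ S : Ω → ℝ, Stop0 ℱ T S → v S =ᵐ[μ] u S := by
  classical
  intro S hS
  have hA : v S ≤ᵐ[μ] u S := by
    refine (hv S hS).2 (u S) ?_
    rintro g ⟨τ, hτ, rfl⟩
    set θ : Ω → ℝ := fun ω => ⨅ i, τ i ω with hθdef
    have hθle : ∀ (ω : Ω) (i : Fin (d+1)), θ ω ≤ τ i ω := fun ω i =>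
      ciInf_le (Set.finite_range _).bddBelow i
    have hθstop : IsStopIn ℱ T S θ := by
      refine ⟨fun t => ?_, fun ω => le_ciInf fun i => (hτ i).2.1 ω,
        fun ω => (hθle ω 0).trans ((hτ 0).2.2 ω)⟩
      have hset : {ω | θ ω ≤ t} = ⋃ i, {ω | τ i ω ≤ t} := by
        ext ω
        simp only [Set.mem_setOf_eq, Set.mem_iUnion]
        constructor
        · intro hle
          obtain ⟨i, hi⟩ := exists_eq_ciInf_of_finite (f := fun i => τ i ω)
          exact ⟨i, le_of_eq_of_le hi hle⟩
        · rintro ⟨i, hi⟩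
          exact (hθle ω i).trans hi
      simp only [WithTop.coe_le_coe]
      rw [hset]
      exact MeasurableSet.iUnion fun i => by
        have hi := (hτ i).1 t
        simp only [WithTop.coe_le_coe] at hi
        exact hi
    have hθ0 : Stop0 ℱ T θ := aux_stop0_of hS hθstop
    obtain ⟨hXτD, hXτ0, -⟩ := hX.1 τ (aux_stopvec0 hS hτ)
    obtain ⟨hLD, hL0, -⟩ := aux_master hT hX hbdd hui hθ0
    have hcondD := 𝔈.cond_mem hθ0 hXτD hXτ0
    have hcond0 := 𝔈.cond_nonneg hθ0 hXτD hXτ0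
    have key : 𝔈.cond θ (X τ) ≤ᵐ[μ] fun ω => ⨆ i, ui i θ ω := by
      set A : Fin (d+1) → Set Ω := fun i => {ω | τ i ω ≤ θ ω} with hAdef
      have hAi : ∀ i, MeasurableSet[hθ0.1.measurableSpace] (A i) := fun i => by
        have hi := IsStoppingTime.measurableSet_stopping_time_le (hτ i).1 hθ0.1
        simp only [WithTop.coe_le_coe] at hi
        exact hi
      have hind : ∀ i : Fin (d+1), (A i).indicator (𝔈.cond θ (X τ))
          ≤ᵐ[μ] (A i).indicator (ui i θ) := by
        intro i
        set σi : Fin d → Ω → ℝ := fun k ω => if ω ∈ A i then τ (i.succAbove k) ω else T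
          with hσidef
        have hσivec : StopVec ℱ T θ σi := fun k =>
          aux_paste_stopIn hθ0 ⟨(hτ _).1, fun ω => hθle ω _, (hτ _).2.2⟩
            ⟨isStoppingTime_const ℱ T, fun ω => hθ0.2.2 ω, fun _ => le_rfl⟩ (hAi i)
        have hinsvec := aux_ins_stopvec hθ0 i hσivec
        obtain ⟨hXiD, hXi0, -⟩ := hX.1 _ (aux_stopvec0 hθ0 hinsvec)
        have heq : ∀ᵐ ω ∂μ, ω ∈ A i → X τ ω = X (i.insertNth θ σi) ω := by
          filter_upwards [hX.2 τ (i.insertNth θ σi) (aux_stopvec0 hS hτ)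
            (aux_stopvec0 hθ0 hinsvec)] with ω hw hmem
          refine hw fun j => ?_
          refine Fin.succAboveCases i ?_ ?_ j
          · rw [Fin.insertNth_apply_same]
            exact le_antisymm hmem (hθle ω i)
          · intro k
            rw [Fin.insertNth_apply_succAbove]
            exact (if_pos hmem).symm
        have hindeq : (A i).indicator (X τ) =ᵐ[μ] (A i).indicator (X (i.insertNth θ σi)) := by
          filter_upwards [heq] with ω hw
          by_cases hω : ω ∈ A i
          · rw [Set.indicator_of_mem hω, Set.indicator_of_mem hω, hw hω]
          · rw [Set.indicator_of_notMem hω, Set.indicator_of_notMem hω]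
        have hAm : MeasurableSet (A i) := hθ0.1.measurableSpace_le _ (hAi i)
        have z1 := 𝔈.zero_one hθ0 hXτD hXτ0 (hAi i)
        have z2 := aux_cond_congr hθ0 (aux_ind_mem hXτD hXτ0 hAm).1
          (aux_ind_mem hXτD hXτ0 hAm).2 (aux_ind_mem hXiD hXi0 hAm).1
          (aux_ind_mem hXiD hXi0 hAm).2 hindeq
        have z3 := 𝔈.zero_one hθ0 hXiD hXi0 (hAi i)
        have hub : 𝔈.cond θ (X (i.insertNth θ σi)) ≤ᵐ[μ] ui i θ :=
          (hui i θ hθ0).1 _ ⟨σi, hσivec, rfl⟩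
        filter_upwards [z1, z2, z3, hub] with ω h1 h2 h3 h4
        rw [← h1, h2, h3]
        by_cases hω : ω ∈ A i
        · rw [Set.indicator_of_mem hω, Set.indicator_of_mem hω]
          exact h4
        · rw [Set.indicator_of_notMem hω, Set.indicator_of_notMem hω]
      have hcov : ∀ ω : Ω, ∃ i, ω ∈ A i := by
        intro ω
        obtain ⟨i, hi⟩ := exists_eq_ciInf_of_finite (f := fun i => τ i ω)
        exact ⟨i, hi.le⟩
      filter_upwards [ae_all_iff.2 hind] with ω hw
      obtain ⟨i, hi⟩ := hcov ω
      have h1 : 𝔈.cond θ (X τ) ω = (A i).indicator (𝔈.cond θ (X τ)) ω :=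
        (Set.indicator_of_mem hi _).symm
      rw [h1]
      refine le_trans (hw i) ?_
      rw [Set.indicator_of_mem hi]
      show ui i θ ω ≤ ⨆ j, ui j θ ω
      exact le_ciSup (f := fun j => ui j θ ω) (Set.finite_range _).bddAbove i
    have htc := 𝔈.time_consistent hS hθ0 hθstop.2.1 hXτD hXτ0
    have hmono2 := 𝔈.mono hS hcondD hcond0 hLD hL0 key
    have hfin : 𝔈.cond S (fun ω => ⨆ i, ui i θ ω) ≤ᵐ[μ] u S :=
      (hu S hS).1 _ ⟨θ, hθstop, by rw [hXh θ]⟩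
    exact (htc.symm.le.trans hmono2).trans hfin
  have hB : u S ≤ᵐ[μ] v S := by
    refine (hu S hS).2 (v S) ?_
    rintro g ⟨θ, hθin, rfl⟩
    have hθ0 := aux_stop0_of hS hθin
    obtain ⟨-, -, hbound⟩ := aux_master hT hX hbdd hui hθ0
    have hres := hbound S (v S) hS hθin.2.1 fun σ hσ => (hv S hS).1 _ ⟨σ, hσ, rfl⟩
    rw [hXh θ]
    exact hres
  exact hA.antisymm hB

end OptMultStop
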